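/- Let n be a natural number, k ∈ ℝ, and for i = 1,…,n let λᵢ, μᵢ, αᵢ, βᵢ, Aᵢ, Bᵢ ∈ ℝ with λᵢ² + μᵢ² = k² for every i. Define T : ℝ² → ℝ by T(x,y) = Σᵢ₌₁ⁿ ( Aᵢ sin(λᵢ x + μᵢ y + αᵢ) + Bᵢ cos(λᵢ x + μᵢ y + βᵢ) ). Let L ⊆ ℝ² be an affine line and let σ_L : ℝ² → ℝ² be the (affine, isometric) reflection across L. If T(p) = 0 for every p ∈ L, then T(σ_L(p)) = -T(p) for every p ∈ ℝ². (Lamé's theorem, part 1: such a solution of the Helmholtz equation is antisymmetric about any line along which it vanishes.) -/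

import Mathlib

open EuclideanGeometry Real

private lemma lame_derivCos {n : ℕ} (a d : Fin n → ℝ)
    (h : ∀ x : ℝ, ∑ i, d i * Real.cos (a i * x) = 0) :
    ∀ x : ℝ, ∑ i, (d i * a i) * Real.sin (a i * x) = 0 := by
  intro x
  have hd : HasDerivAt (fun y : ℝ => ∑ i, d i * Real.cos (a i * y))
      (∑ i, d i * (-Real.sin (a i * x) * (a i * 1))) x := by
    apply HasDerivAt.fun_sum
    intro i _
    exact (((hasDerivAt_id x).const_mul (a i)).cos).const_mul (d i)
  have hfe : (fun y : ℝ => ∑ i, d i * Real.cos (a i * y)) = fun _ => 0 := funext h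
  rw [hfe] at hd
  have h2 := hd.unique (hasDerivAt_const x 0)
  calc ∑ i, (d i * a i) * Real.sin (a i * x)
      = -∑ i, d i * (-Real.sin (a i * x) * (a i * 1)) := by
        rw [← Finset.sum_neg_distrib]
        exact Finset.sum_congr rfl fun i _ => by ring
    _ = 0 := by rw [h2, neg_zero]

private lemma lame_derivSin {n : ℕ} (a d : Fin n → ℝ)
    (h : ∀ x : ℝ, ∑ i, d i * Real.sin (a i * x) = 0) :
    ∀ x : ℝ, ∑ i, (d i * a i) * Real.cos (a i * x) = 0 := by
  intro x
  have hd : HasDerivAt (fun y : ℝ => ∑ i, d i * Real.sin (a i * y))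
      (∑ i, d i * (Real.cos (a i * x) * (a i * 1))) x := by
    apply HasDerivAt.fun_sum
    intro i _
    exact (((hasDerivAt_id x).const_mul (a i)).sin).const_mul (d i)
  have hfe : (fun y : ℝ => ∑ i, d i * Real.sin (a i * y)) = fun _ => 0 := funext h
  rw [hfe] at hd
  have h2 := hd.unique (hasDerivAt_const x 0)
  calc ∑ i, (d i * a i) * Real.cos (a i * x)
      = ∑ i, d i * (Real.cos (a i * x) * (a i * 1)) :=
        Finset.sum_congr rfl fun i _ => by ring
    _ = 0 := h2

private lemma lame_sqStep {n : ℕ} (a d : Fin n → ℝ)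
    (h : ∀ x : ℝ, ∑ i, d i * Real.cos (a i * x) = 0) :
    ∑ i, d i * a i ^ 2 = 0 := by
  have h2 := lame_derivSin a (fun i => d i * a i) (lame_derivCos a d h) 0
  calc ∑ i, d i * a i ^ 2
      = ∑ i, (d i * a i * a i) * Real.cos (a i * 0) := by
        refine Finset.sum_congr rfl fun i _ => ?_
        rw [mul_zero, Real.cos_zero]; ring
    _ = 0 := h2

private lemma lame_powStep {n : ℕ} (a : Fin n → ℝ) (P : Fin n → ℝ → ℝ)
    (hP : ∀ i t h, P i (t + h) + P i (t - h) = 2 * Real.cos (a i * h) * P i t)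
    (h0 : ∀ t, ∑ i, P i t = 0) :
    ∀ (j : ℕ) (t : ℝ), ∑ i, (a i ^ 2) ^ j * P i t = 0 := by
  intro j
  induction j with
  | zero => simpa using h0
  | succ j ih =>
    intro t
    have trans : ∀ h : ℝ, ∑ i, ((a i ^ 2) ^ j * P i t) * Real.cos (a i * h) = 0 := by
      intro h
      have key : ∑ i, 2 * (((a i ^ 2) ^ j * P i t) * Real.cos (a i * h)) = 0 := by
        have e : ∀ i ∈ Finset.univ, 2 * (((a i ^ 2) ^ j * P i t) * Real.cos (a i * h))
            = (a i ^ 2) ^ j * P i (t + h) + (a i ^ 2) ^ j * P i (t - h) := fun i _ => by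
          linear_combination (-(a i ^ 2) ^ j) * hP i t h
        rw [Finset.sum_congr rfl e, Finset.sum_add_distrib, ih (t + h), ih (t - h), add_zero]
      rw [← Finset.mul_sum] at key
      linarith
    have := lame_sqStep a (fun i => (a i ^ 2) ^ j * P i t) trans
    calc ∑ i, (a i ^ 2) ^ (j + 1) * P i t
        = ∑ i, ((a i ^ 2) ^ j * P i t) * a i ^ 2 :=
          Finset.sum_congr rfl fun i _ => by ring
      _ = 0 := this

private lemma lame_core {n : ℕ} (k : ℝ) (a b : Fin n → ℝ) (P : Fin n → ℝ → ℝ)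
    (hab : ∀ i, a i ^ 2 + b i ^ 2 = k ^ 2)
    (hP : ∀ i t h, P i (t + h) + P i (t - h) = 2 * Real.cos (a i * h) * P i t)
    (h0 : ∀ t, ∑ i, P i t = 0) :
    ∀ t s : ℝ, ∑ i, Real.cos (b i * s) * P i t = 0 := by
  have hbm : ∀ (m : ℕ) (t : ℝ), ∑ i, (b i ^ 2) ^ m * P i t = 0 := by
    intro m t
    have expand : ∀ i ∈ Finset.univ, (b i ^ 2) ^ m * P i t
        = ∑ j ∈ Finset.range (m + 1),
            ((k ^ 2) ^ j * (-(a i ^ 2)) ^ (m - j) * (m.choose j : ℝ)) * P i t := by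
      intro i _
      have hb : b i ^ 2 = k ^ 2 + -(a i ^ 2) := by linarith [hab i]
      rw [hb, add_pow, Finset.sum_mul]
    rw [Finset.sum_congr rfl expand, Finset.sum_comm]
    apply Finset.sum_eq_zero
    intro j _
    have e2 : ∀ i ∈ Finset.univ,
        ((k ^ 2) ^ j * (-(a i ^ 2)) ^ (m - j) * (m.choose j : ℝ)) * P i t
        = ((k ^ 2) ^ j * (-1 : ℝ) ^ (m - j) * (m.choose j : ℝ)) * ((a i ^ 2) ^ (m - j) * P i t) := by
      intro i _
      rw [neg_pow]; ring
    rw [Finset.sum_congr rfl e2, ← Finset.mul_sum, lame_powStep a P hP h0 (m - j) t, mul_zero]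
  intro t s
  have hs : ∀ i ∈ Finset.univ, HasSum
      (fun m : ℕ => ((-1) ^ m * (b i * s) ^ (2 * m) / (Nat.factorial (2 * m) : ℝ)) * P i t)
      (Real.cos (b i * s) * P i t) := fun i _ => (Real.hasSum_cos (b i * s)).mul_right (P i t)
  have hsum := hasSum_sum hs
  have hzero : (fun m : ℕ =>
      ∑ i, ((-1) ^ m * (b i * s) ^ (2 * m) / (Nat.factorial (2 * m) : ℝ)) * P i t)
      = fun _ => (0 : ℝ) := by
    funext m
    have e : ∀ i ∈ Finset.univ,
        ((-1 : ℝ) ^ m * (b i * s) ^ (2 * m) / (Nat.factorial (2 * m) : ℝ)) * P i t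
        = ((-1) ^ m * s ^ (2 * m) / (Nat.factorial (2 * m) : ℝ)) * ((b i ^ 2) ^ m * P i t) := by
      intro i _
      rw [mul_pow, pow_mul]
      ring
    rw [Finset.sum_congr rfl e, ← Finset.mul_sum, hbm m t, mul_zero]
  rw [hzero] at hsum
  exact (hasSum_zero.unique hsum).symm

private lemma lame_trigPair (A B ph ps X Y : ℝ) :
    (A * Real.sin (X + Y + ph) + B * Real.cos (X + Y + ps)) +
    (A * Real.sin (X - Y + ph) + B * Real.cos (X - Y + ps)) =
    2 * Real.cos Y * (A * Real.sin (X + ph) + B * Real.cos (X + ps)) := by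
  have e1 : X + Y + ph = (X + ph) + Y := by ring
  have e2 : X - Y + ph = (X + ph) - Y := by ring
  have e3 : X + Y + ps = (X + ps) + Y := by ring
  have e4 : X - Y + ps = (X + ps) - Y := by ring
  rw [e1, e2, e3, e4, Real.sin_add (X + ph) Y, Real.sin_sub (X + ph) Y,
      Real.cos_add (X + ps) Y, Real.cos_sub (X + ps) Y]
  ring

private lemma lame_key {n : ℕ} (k : ℝ) (a b ph ps A B : Fin n → ℝ)
    (hab : ∀ i, a i ^ 2 + b i ^ 2 = k ^ 2)
    (h0 : ∀ t : ℝ, ∑ i, (A i * Real.sin (a i * t + ph i) + B i * Real.cos (a i * t + ps i)) = 0) :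
    ∀ t s : ℝ,
      ∑ i, (A i * Real.sin (a i * t + b i * s + ph i) +
            B i * Real.cos (a i * t + b i * s + ps i)) +
      ∑ i, (A i * Real.sin (a i * t + b i * (-s) + ph i) +
            B i * Real.cos (a i * t + b i * (-s) + ps i)) = 0 := by
  set P : Fin n → ℝ → ℝ :=
    fun i t => A i * Real.sin (a i * t + ph i) + B i * Real.cos (a i * t + ps i) with hPdef
  have hP : ∀ i t h, P i (t + h) + P i (t - h) = 2 * Real.cos (a i * h) * P i t := by
    intro i t h
    simp only [hPdef]
    have htp := lame_trigPair (A i) (B i) (ph i) (ps i) (a i * t) (a i * h)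
    rw [show a i * (t + h) + ph i = a i * t + a i * h + ph i by ring,
        show a i * (t - h) + ph i = a i * t - a i * h + ph i by ring,
        show a i * (t + h) + ps i = a i * t + a i * h + ps i by ring,
        show a i * (t - h) + ps i = a i * t - a i * h + ps i by ring]
    exact htp
  have hcore := lame_core k a b P hab hP h0
  intro t s
  have e : ∀ i ∈ Finset.univ,
      (A i * Real.sin (a i * t + b i * s + ph i) + B i * Real.cos (a i * t + b i * s + ps i)) +
      (A i * Real.sin (a i * t + b i * (-s) + ph i) + B i * Real.cos (a i * t + b i * (-s) + ps i))
      = 2 * (Real.cos (b i * s) * P i t) := by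
    intro i _
    simp only [hPdef]
    have htp := lame_trigPair (A i) (B i) (ph i) (ps i) (a i * t) (b i * s)
    rw [show a i * t + b i * (-s) + ph i = a i * t - b i * s + ph i by ring,
        show a i * t + b i * (-s) + ps i = a i * t - b i * s + ps i by ring]
    rw [htp]; ring
  rw [← Finset.sum_add_distrib, Finset.sum_congr rfl e, ← Finset.mul_sum, hcore t s, mul_zero]

/-- Lamé's theorem, part 1: a finite trigonometric solution of the Helmholtz
equation is antisymmetric about any affine line along which it vanishes. -/
theorem lame_antisymmetric
    (n : ℕ) (k : ℝ) (lam mu al be A B : Fin n → ℝ)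
    (hk : ∀ i, (lam i) ^ 2 + (mu i) ^ 2 = k ^ 2)
    (T : EuclideanSpace ℝ (Fin 2) → ℝ)
    (hT : ∀ p, T p = ∑ i, (A i * Real.sin (lam i * p 0 + mu i * p 1 + al i) +
                            B i * Real.cos (lam i * p 0 + mu i * p 1 + be i)))
    (L : AffineSubspace ℝ (EuclideanSpace ℝ (Fin 2)))
    [Nonempty L]
    (hline : Module.finrank ℝ L.direction = 1)
    (hvanish : ∀ p ∈ L, T p = 0) :
    ∀ p, T (EuclideanGeometry.reflection L p) = - T p := by
  classical
  obtain ⟨⟨q0, hq0⟩⟩ := ‹Nonempty L›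
  have hne : L.direction ≠ ⊥ := by
    intro h; rw [h] at hline; simp at hline
  obtain ⟨v', hv'mem, hv'ne⟩ := Submodule.exists_mem_ne_zero_of_ne_bot hne
  set v : EuclideanSpace ℝ (Fin 2) := ‖v'‖⁻¹ • v' with hvdef
  have hvmem : v ∈ L.direction := Submodule.smul_mem _ _ hv'mem
  have hvnorm : ‖v‖ = 1 := by
    rw [hvdef, norm_smul, norm_inv, norm_norm, inv_mul_cancel₀ (norm_ne_zero_iff.mpr hv'ne)]
  have hvne : v ≠ 0 := by
    intro h; rw [h, norm_zero] at hvnorm; exact one_ne_zero hvnorm.symm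
  have hspan : L.direction = Submodule.span ℝ {v} := by
    symm
    apply Submodule.eq_of_le_of_finrank_eq
    · rwa [Submodule.span_singleton_le_iff_mem]
    · rw [finrank_span_singleton hvne, hline]
  have hvsq : v 0 ^ 2 + v 1 ^ 2 = 1 := by
    have h : ‖v‖ ^ 2 = 1 := by rw [hvnorm]; norm_num
    rw [← h, EuclideanSpace.norm_eq, Real.sq_sqrt (by positivity)]
    simp [Fin.sum_univ_two, Real.norm_eq_abs, sq_abs]
  set w : EuclideanSpace ℝ (Fin 2) := !₂[-(v 1), v 0] with hwdef
  have hw0 : w 0 = -(v 1) := rfl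
  have hw1 : w 1 = v 0 := rfl
  have hvw : (inner ℝ v w : ℝ) = 0 := by
    simp only [PiLp.inner_apply, RCLike.inner_apply, Fin.sum_univ_two, hw0, hw1,
      starRingEnd_apply, star_trivial]
    ring
  -- abbreviations for the trig data
  have hab : ∀ i, (lam i * v 0 + mu i * v 1) ^ 2 + (mu i * v 0 - lam i * v 1) ^ 2 = k ^ 2 :=
    fun i => by linear_combination (lam i ^ 2 + mu i ^ 2) * hvsq + hk i
  -- the value of T on coordinates adapted to the line
  have hTF : ∀ t' s' : ℝ, T (q0 + t' • v + s' • w) =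
      ∑ i, (A i * Real.sin ((lam i * v 0 + mu i * v 1) * t' + (mu i * v 0 - lam i * v 1) * s' +
              (lam i * q0 0 + mu i * q0 1 + al i)) +
            B i * Real.cos ((lam i * v 0 + mu i * v 1) * t' + (mu i * v 0 - lam i * v 1) * s' +
              (lam i * q0 0 + mu i * q0 1 + be i))) := by
    intro t' s'
    rw [hT]
    refine Finset.sum_congr rfl fun i _ => ?_
    have c0 : (q0 + t' • v + s' • w) 0 = q0 0 + t' * v 0 + s' * (-(v 1)) := by
      simp [PiLp.add_apply, PiLp.smul_apply, hw0, smul_eq_mul]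
    have c1 : (q0 + t' • v + s' • w) 1 = q0 1 + t' * v 1 + s' * v 0 := by
      simp [PiLp.add_apply, PiLp.smul_apply, hw1, smul_eq_mul]
    rw [c0, c1,
      show lam i * (q0 0 + t' * v 0 + s' * (-(v 1))) + mu i * (q0 1 + t' * v 1 + s' * v 0) + al i
        = (lam i * v 0 + mu i * v 1) * t' + (mu i * v 0 - lam i * v 1) * s' +
          (lam i * q0 0 + mu i * q0 1 + al i) by ring,
      show lam i * (q0 0 + t' * v 0 + s' * (-(v 1))) + mu i * (q0 1 + t' * v 1 + s' * v 0) + be i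
        = (lam i * v 0 + mu i * v 1) * t' + (mu i * v 0 - lam i * v 1) * s' +
          (lam i * q0 0 + mu i * q0 1 + be i) by ring]
  -- T vanishes along the line
  have h0 : ∀ t' : ℝ, ∑ i, (A i * Real.sin ((lam i * v 0 + mu i * v 1) * t' +
        (lam i * q0 0 + mu i * q0 1 + al i)) +
      B i * Real.cos ((lam i * v 0 + mu i * v 1) * t' +
        (lam i * q0 0 + mu i * q0 1 + be i))) = 0 := by
    intro t'
    have hmem : q0 + t' • v + (0 : ℝ) • w ∈ L := by
      rw [zero_smul, add_zero]
      have := AffineSubspace.vadd_mem_of_mem_direction (Submodule.smul_mem _ t' hvmem) hq0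
      simpa [vadd_eq_add, add_comm] using this
    have := hvanish _ hmem
    rw [hTF t' 0] at this
    simpa [mul_zero, add_zero] using this
  have hkey := lame_key k (fun i => lam i * v 0 + mu i * v 1)
    (fun i => mu i * v 0 - lam i * v 1)
    (fun i => lam i * q0 0 + mu i * q0 1 + al i)
    (fun i => lam i * q0 0 + mu i * q0 1 + be i) A B hab h0
  intro p
  set t : ℝ := (p 0 - q0 0) * v 0 + (p 1 - q0 1) * v 1 with htdef
  set s : ℝ := (p 1 - q0 1) * v 0 - (p 0 - q0 0) * v 1 with hsdef
  have hp : p = q0 + t • v + s • w := by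
    ext i
    fin_cases i
    · simp only [PiLp.add_apply, PiLp.smul_apply, hw0, smul_eq_mul, htdef, hsdef]
      show p 0 = q0 0 + _ * v 0 + _ * (-(v 1))
      linear_combination (-(p 0 - q0 0)) * hvsq
    · simp only [PiLp.add_apply, PiLp.smul_apply, hw1, smul_eq_mul, htdef, hsdef]
      show p 1 = q0 1 + _ * v 1 + _ * v 0
      linear_combination (-(p 1 - q0 1)) * hvsq
  -- the reflection of p
  set q1 : EuclideanSpace ℝ (Fin 2) := q0 + t • v with hq1def
  have hfoot : q1 ∈ L := by
    have := AffineSubspace.vadd_mem_of_mem_direction (Submodule.smul_mem _ t hvmem) hq0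
    simpa [hq1def, vadd_eq_add, add_comm] using this
  have horth : ∀ c : ℝ, c • w ∈ L.directionᗮ := by
    intro c
    rw [hspan, Submodule.mem_orthogonal]
    intro u hu
    obtain ⟨c', rfl⟩ := Submodule.mem_span_singleton.mp hu
    rw [inner_smul_left, inner_smul_right]
    simp [hvw]
  have hproj : (EuclideanGeometry.orthogonalProjection L p : EuclideanSpace ℝ (Fin 2)) = q1 := by
    have hmem2 : q1 ∈ AffineSubspace.mk' p L.directionᗮ := by
      rw [AffineSubspace.mem_mk']
      have e : q1 -ᵥ p = (-s) • w := by
        rw [hp, hq1def]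
        simp only [vsub_eq_sub]
        module
      rw [e]
      exact horth (-s)
    have hmem : q1 ∈ (L : Set _) ∩ AffineSubspace.mk' p L.directionᗮ := ⟨hfoot, hmem2⟩
    rw [EuclideanGeometry.inter_eq_singleton_orthogonalProjection p] at hmem
    exact (Set.mem_singleton_iff.mp hmem).symm
  have hrefl : EuclideanGeometry.reflection L p = q0 + t • v + (-s) • w := by
    rw [EuclideanGeometry.reflection_apply', hproj, hp]
    simp only [vsub_eq_sub, vadd_eq_add, hq1def]
    module
  have hTp : T p = ∑ i, (A i * Real.sin ((lam i * v 0 + mu i * v 1) * t +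
        (mu i * v 0 - lam i * v 1) * s + (lam i * q0 0 + mu i * q0 1 + al i)) +
      B i * Real.cos ((lam i * v 0 + mu i * v 1) * t +
        (mu i * v 0 - lam i * v 1) * s + (lam i * q0 0 + mu i * q0 1 + be i))) := by
    rw [hp]; exact hTF t s
  have hTr : T (EuclideanGeometry.reflection L p) =
      ∑ i, (A i * Real.sin ((lam i * v 0 + mu i * v 1) * t +
        (mu i * v 0 - lam i * v 1) * (-s) + (lam i * q0 0 + mu i * q0 1 + al i)) +
      B i * Real.cos ((lam i * v 0 + mu i * v 1) * t +
        (mu i * v 0 - lam i * v 1) * (-s) + (lam i * q0 0 + mu i * q0 1 + be i))) := by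
    rw [hrefl]; exact hTF t (-s)
  have hk2 := hkey t s
  rw [hTr, hTp]
  linarith [hk2]
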